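/- In the 4-3-6-5 sequence starting at k, the first element of the r-th segment is at most ⌈k/2^{r-1}⌉, and the number of segments is at most ⌊log₂ k⌋. -/

import Mathlib

/-- One transition of Table 1 of the paper, acting on (current element, type). -/
def step465 : ℕ × ℕ × ℕ → ℕ × ℕ × ℕ
  | (t, 4, 3) => (t - 1, 4, 2)
  | (t, 4, 2) => (t - 1, 4, 1)
  | (t, 4, 1) => ((3 * t + 1) / 4, 3, 1)
  | (t, 4, 0) => (3 * t / 4, 3, 0)
  | (t, 3, 1) => if 4 < t then (t, 6, t % 6) else (3, 3, 0)
  | (t, 3, 0) => if 4 < t then (t, 6, t % 6) else (t, 3, 0)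
  | (t, 6, 4) => (t - 1, 6, 3)
  | (t, 6, 3) => (t - 1, 6, 2)
  | (t, 6, 2) => (t - 1, 6, 1)
  | (t, 6, 1) => ((5 * t + 1) / 6, 5, 1)
  | (t, 6, 0) => (5 * t / 6, 5, 0)
  | (t, 5, 1) => ((4 * t + 1) / 5, 4, 1)
  | (t, 5, 0) => (4 * t / 5, 4, 0)
  | p => p

/-- The `i`-th element (0-indexed, paired with its type) of the 4-3-6-5 sequence starting at `k`. -/
def seq465 (k i : ℕ) : ℕ × ℕ × ℕ := step465^[i] (k, 4, k % 4)

/-- An element starts a new segment iff its type is `(4,0)` or `(4,1)`. -/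
def isStart465 (p : ℕ × ℕ × ℕ) : Prop := p.2 = (4, 0) ∨ p.2 = (4, 1)

/-- `NthSegStart k r i` means that position `i` is the start of the `r`-th segment
(1-indexed) of the 4-3-6-5 sequence starting at `k`. -/
inductive NthSegStart (k : ℕ) : ℕ → ℕ → Prop
  | first (i : ℕ) : isStart465 (seq465 k i) → (∀ m, m < i → ¬ isStart465 (seq465 k m)) →
      NthSegStart k 1 i
  | next (r i j : ℕ) : NthSegStart k r i → i < j → isStart465 (seq465 k j) →
      (∀ m, i < m → m < j → ¬ isStart465 (seq465 k m)) → NthSegStart k (r + 1) j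

/-- Invariant describing all reachable states of the 4-3-6-5 dynamics (for `k ≥ 4`). -/
def Inv465 (p : ℕ × ℕ × ℕ) : Prop :=
  (p.2 = (4,0) ∧ 4 ≤ p.1 ∧ p.1 % 4 = 0) ∨
  (p.2 = (4,1) ∧ 5 ≤ p.1 ∧ p.1 % 4 = 1) ∨
  (p.2 = (4,2) ∧ 6 ≤ p.1 ∧ p.1 % 4 = 2) ∨
  (p.2 = (4,3) ∧ 7 ≤ p.1 ∧ p.1 % 4 = 3) ∨
  (p.2 = (3,0) ∧ 3 ≤ p.1 ∧ p.1 % 3 = 0) ∨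
  (p.2 = (3,1) ∧ 4 ≤ p.1 ∧ p.1 % 3 = 1) ∨
  (p.2 = (6,0) ∧ 3 ≤ p.1 ∧ p.1 % 6 = 0) ∨
  (p.2 = (6,1) ∧ 4 ≤ p.1 ∧ p.1 % 6 = 1) ∨
  (p.2 = (6,2) ∧ 5 ≤ p.1 ∧ p.1 % 6 = 2) ∨
  (p.2 = (6,3) ∧ 6 ≤ p.1 ∧ p.1 % 6 = 3) ∨
  (p.2 = (6,4) ∧ 7 ≤ p.1 ∧ p.1 % 6 = 4) ∨
  (p.2 = (5,0) ∧ 5 ≤ p.1 ∧ p.1 % 5 = 0) ∨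
  (p.2 = (5,1) ∧ 6 ≤ p.1 ∧ p.1 % 5 = 1)

/-- An upper bound on the value of any future segment start reachable from `p`. -/
def Cb465 (p : ℕ × ℕ × ℕ) : ℕ :=
  if p.2.1 = 4 then p.1
  else if p.2.1 = 3 ∨ p.2.1 = 6 then
    4 * (p.1 / 6) + (if p.2.2 = 0 ∧ p.1 % 6 = 0 then 0 else 1)
  else if p.2.1 = 5 then
    4 * (p.1 / 5) + (if p.2.2 = 0 then 0 else 1)
  else 0

lemma inv465_step (p : ℕ × ℕ × ℕ) (h : Inv465 p) : Inv465 (step465 p) := by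
  obtain ⟨t, q⟩ := p
  rcases h with ⟨h1,h2⟩|⟨h1,h2⟩|⟨h1,h2⟩|⟨h1,h2⟩|⟨h1,h2⟩|⟨h1,h2⟩|⟨h1,h2⟩|⟨h1,h2⟩|⟨h1,h2⟩|⟨h1,h2⟩|⟨h1,h2⟩|⟨h1,h2⟩|⟨h1,h2⟩ <;>
    simp only at h1 <;> subst h1 <;> simp only [step465, Inv465] <;>
    first
      | (split_ifs with hc <;> simp_all <;> omega)
      | (simp_all <;> omega)

set_option maxHeartbeats 1600000 in
lemma cb465_step (p : ℕ × ℕ × ℕ) (h : Inv465 p) : Cb465 (step465 p) ≤ Cb465 p := by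
  obtain ⟨t, q⟩ := p
  rcases h with ⟨h1,h2⟩|⟨h1,h2⟩|⟨h1,h2⟩|⟨h1,h2⟩|⟨h1,h2⟩|⟨h1,h2⟩|⟨h1,h2⟩|⟨h1,h2⟩|⟨h1,h2⟩|⟨h1,h2⟩|⟨h1,h2⟩|⟨h1,h2⟩|⟨h1,h2⟩ <;>
    simp only at h1 <;> subst h1 <;> simp only [step465, Cb465] <;>
    first
      | (split_ifs with hc <;> simp_all <;> omega)
      | (simp_all <;> omega)

lemma cb465_halve (p : ℕ × ℕ × ℕ) (h : Inv465 p) (hs : p.2 = (4,0) ∨ p.2 = (4,1)) :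
    2 * Cb465 (step465 p) ≤ p.1 + 1 ∧ 4 ≤ p.1 := by
  obtain ⟨t, q⟩ := p
  rcases hs with h1 | h1 <;> simp only at h1 <;> subst h1 <;>
    simp only [Inv465, Prod.mk.injEq] at h <;>
    simp only [step465, Cb465] <;>
    (split_ifs with hc <;> simp_all <;> omega)

lemma cb465_type4 (p : ℕ × ℕ × ℕ) (h : p.2.1 = 4) : Cb465 p = p.1 := by
  simp [Cb465, h]

lemma inv465_start (p : ℕ × ℕ × ℕ) (h : Inv465 p) (hs : isStart465 p) : 4 ≤ p.1 := by
  rcases hs with h1 | h1 <;>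
    simp only [Inv465, h1, Prod.mk.injEq] at h <;> simp_all <;> omega

lemma seq465_succ (k i : ℕ) : seq465 k (i+1) = step465 (seq465 k i) :=
  Function.iterate_succ_apply' _ _ _

lemma seq465_add (k i n : ℕ) : seq465 k (i + n) = step465^[n] (seq465 k i) := by
  unfold seq465; rw [add_comm, Function.iterate_add_apply]

lemma inv465_seq (k : ℕ) (hk : 4 ≤ k) (i : ℕ) : Inv465 (seq465 k i) := by
  induction i with
  | zero =>
      show Inv465 (k, 4, k % 4)
      have h4 : k % 4 = 0 ∨ k % 4 = 1 ∨ k % 4 = 2 ∨ k % 4 = 3 := by omega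
      unfold Inv465
      rcases h4 with h | h | h | h <;> simp [h] <;> omega
  | succ n ih => rw [seq465_succ]; exact inv465_step _ ih

lemma inv465_iter (p : ℕ × ℕ × ℕ) (h : Inv465 p) (n : ℕ) : Inv465 (step465^[n] p) := by
  induction n with
  | zero => simpa
  | succ m ih => rw [Function.iterate_succ_apply']; exact inv465_step _ ih

lemma cb465_iter (p : ℕ × ℕ × ℕ) (h : Inv465 p) (n : ℕ) :
    Cb465 (step465^[n] p) ≤ Cb465 p := by
  induction n with
  | zero => simp
  | succ m ih =>
      rw [Function.iterate_succ_apply']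
      exact le_trans (cb465_step _ (inv465_iter p h m)) ih

lemma nthSegStart_pos (k r i : ℕ) (h : NthSegStart k r i) : 1 ≤ r := by
  induction h with
  | first => exact le_refl 1
  | next => omega

lemma key465 (k : ℕ) (hk : 4 ≤ k) (r i : ℕ) (hseg : NthSegStart k r i) :
    2^(r-1) * (seq465 k i).1 ≤ k + 2^(r-1) - 1 ∧
    2^(r-1) * ((seq465 k i).1 - 2) ≤ k - 2 ∧ isStart465 (seq465 k i) := by
  induction hseg with
  | first i hs hmin =>
      have h4 : (seq465 k i).2.1 = 4 := by
        rcases hs with h | h <;> rw [h]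
      have hle : (seq465 k i).1 ≤ k := by
        have h0 : Cb465 (seq465 k 0) = k := by
          rw [show seq465 k 0 = (k, 4, k % 4) from rfl, cb465_type4] <;> rfl
        have := cb465_iter (seq465 k 0) (inv465_seq k hk 0) i
        rw [show step465^[i] (seq465 k 0) = seq465 k i from by
          rw [← seq465_add]; ring_nf, h0, cb465_type4 _ h4] at this
        exact this
      refine ⟨by simpa using (by omega : (seq465 k i).1 ≤ k + 1 - 1), by simp; omega, hs⟩
  | next r i j hprev hij hs hbetween ih =>
      obtain ⟨ihC, ihD, ihS⟩ := ih
      have hr1 : 1 ≤ r := nthSegStart_pos k r i hprev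
      have hinv : Inv465 (seq465 k i) := inv465_seq k hk i
      obtain ⟨hhalf, h4i⟩ := cb465_halve _ hinv ihS
      have h4j : (seq465 k j).2.1 = 4 := by rcases hs with h | h <;> rw [h]
      have hvj : (seq465 k j).1 ≤ Cb465 (step465 (seq465 k i)) := by
        have hj : seq465 k j = step465^[j - (i+1)] (step465 (seq465 k i)) := by
          rw [← seq465_succ, ← seq465_add]; congr 1; omega
        rw [← cb465_type4 _ h4j, hj]
        exact cb465_iter _ (inv465_step _ hinv) _
      set t := (seq465 k i).1 with ht
      set t' := (seq465 k j).1 with ht'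
      have h2t : 2 * t' ≤ t + 1 := by omega
      have hpow : 2^(r+1-1) = 2 * 2^(r-1) := by
        rw [show r + 1 - 1 = (r-1) + 1 from by omega, pow_succ]; ring
      constructor
      · rw [hpow]
        calc 2 * 2^(r-1) * t' = 2^(r-1) * (2 * t') := by ring
          _ ≤ 2^(r-1) * (t + 1) := Nat.mul_le_mul_left _ h2t
          _ = 2^(r-1) * t + 2^(r-1) := by ring
          _ ≤ k + (2 * 2^(r-1)) - 1 := by
              have hp : 1 ≤ 2^(r-1) := Nat.one_le_two_pow
              omega
      refine ⟨?_, hs⟩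
      rw [hpow]
      calc 2 * 2^(r-1) * (t' - 2) = 2^(r-1) * (2 * (t' - 2)) := by ring
        _ ≤ 2^(r-1) * (t - 3) := Nat.mul_le_mul_left _ (by omega)
        _ ≤ 2^(r-1) * (t - 2) := Nat.mul_le_mul_left _ (by omega)
        _ ≤ k - 2 := ihD

/-- In the 4-3-6-5 sequence starting at `k`, the first element of the `r`-th segment is at most
`⌈k/2^(r-1)⌉`, and the number of segments is at most `⌊log₂ k⌋`. -/
theorem seq465_segment_start_bound (k : ℕ) (hk : 4 ≤ k) (r i : ℕ)
    (hseg : NthSegStart k r i) :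
    (seq465 k i).1 ≤ ⌈(k : ℝ) / 2 ^ (r - 1)⌉₊ ∧ r ≤ Nat.log 2 k := by
  obtain ⟨hC, hD, hS⟩ := key465 k hk r i hseg
  have hr1 : 1 ≤ r := nthSegStart_pos k r i hseg
  have h4 : 4 ≤ (seq465 k i).1 := inv465_start _ (inv465_seq k hk i) hS
  set t := (seq465 k i).1 with ht
  constructor
  · rcases Nat.eq_zero_or_pos t with h0 | hpos
    · simp [h0]
    have : t - 1 < ⌈(k : ℝ) / 2 ^ (r - 1)⌉₊ := by
      rw [Nat.lt_ceil]
      rw [lt_div_iff₀ (by positivity : (0:ℝ) < 2 ^ (r-1))]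
      have hnat : (t - 1) * 2^(r-1) < k := by
        have hp : 1 ≤ 2^(r-1) := Nat.one_le_two_pow
        have h1 : 2^(r-1) * (t - 1) + 2^(r-1) = 2^(r-1) * t := by
          rw [← Nat.mul_succ]; congr 1; omega
        have h2 : (t - 1) * 2^(r-1) = 2^(r-1) * (t - 1) := Nat.mul_comm _ _
        omega
      calc ((t - 1 : ℕ) : ℝ) * 2^(r-1) = (((t-1) * 2^(r-1) : ℕ) : ℝ) := by push_cast; ring
        _ < (k : ℝ) := by exact_mod_cast hnat
    omega
  · have h2r : 2^r ≤ k := by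
      have : 2^(r-1) * 2 ≤ 2^(r-1) * (t - 2) := Nat.mul_le_mul_left _ (by omega)
      have hpow : 2^(r-1) * 2 = 2^r := by
        rw [← pow_succ, Nat.sub_add_cancel hr1]
      omega
    exact (Nat.le_log_iff_pow_le (by norm_num) (by omega)).mpr h2r
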